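/- Let X be a compact Hausdorff space and let A ⊆ C(X) be a set with 0_X ∈ A and such that φ + c·1_X ∈ A whenever φ ∈ A and c ∈ ℝ. Let ν : A → ℝ satisfy ν(1_X) = 1, ν(φ + c·1_X) = ν(φ) + c for all φ ∈ A, c ∈ ℝ, and ν(φ) ≤ ν(ψ) whenever φ, ψ ∈ A with φ ≤ ψ pointwise. Let ψ ∈ C(X) \ A and a ∈ ℝ. Then there exists an extension of ν to a normed, weakly additive, order-preserving functional on all of C(X) taking the value a at ψ if and only if sup{ν(φ) : φ ∈ A, φ ≤ ψ} ≤ a ≤ inf{ν(φ) : φ ∈ A, φ ≥ ψ}. -/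

import Mathlib

/-- The set of normed, weakly additive, order-preserving functionals on `C(X, ℝ)`. -/
def OF (X : Type*) [TopologicalSpace X] : Set (C(X, ℝ) → ℝ) :=
  {ν | ν 1 = 1 ∧ (∀ (φ : C(X, ℝ)) (c : ℝ), ν (φ + ContinuousMap.const X c) = ν φ + c) ∧
    ∀ φ ψ : C(X, ℝ), φ ≤ ψ → ν φ ≤ ν ψ}

/-- For `φ ∈ C(X, ℝ)`, the evaluation map `π_φ : O(X) → ℝ`. -/
def piO (X : Type*) [TopologicalSpace X] (φ : C(X, ℝ)) : C(↥(OF X), ℝ) :=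
  ⟨fun ν => ν.1 φ, (continuous_apply φ).comp continuous_subtype_val⟩

/-- The monad multiplication `μ_O X : O(O(X)) → O(X)`, `μ_O X (M) (φ) = M (π_φ)`. -/
def muO (X : Type*) [TopologicalSpace X] (M : ↥(OF (↥(OF X)))) : ↥(OF X) := by
  refine ⟨fun φ => M.1 (piO X φ), ?_, ?_, ?_⟩
  · have h1 : piO X (1 : C(X, ℝ)) = 1 := by
      ext ν; exact ν.2.1
    show M.1 (piO X 1) = 1
    rw [h1]; exact M.2.1
  · intro φ c
    have h : piO X (φ + ContinuousMap.const X c)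
        = piO X φ + ContinuousMap.const _ c := by
      ext ν; exact ν.2.2.1 φ c
    show M.1 (piO X (φ + ContinuousMap.const X c)) = M.1 (piO X φ) + c
    rw [h]; exact M.2.2.1 _ c
  · intro φ ψ h
    exact M.2.2.2 _ _ (fun ν => ν.2.2.2 φ ψ h)

/-- Extension of an order-preserving functional over a single function: given a
normed, weakly additive, order-preserving functional `ν` defined on a subset `A ⊆ C(X)`
containing `0` and closed under adding constants, and `ψ ∉ A`, an extension of `ν` to all
of `C(X)` (normed, weakly additive, order-preserving) with value `a` at `ψ` exists iff
`sup{ν(φ) : φ ∈ A, φ ≤ ψ} ≤ a ≤ inf{ν(φ) : φ ∈ A, φ ≥ ψ}`. -/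
theorem extend_orderPreserving_over_single (X : Type*) [TopologicalSpace X] [CompactSpace X]
    [T2Space X] (A : Set C(X, ℝ)) (h0 : (0 : C(X, ℝ)) ∈ A)
    (hA : ∀ φ ∈ A, ∀ c : ℝ, φ + ContinuousMap.const X c ∈ A)
    (ν : C(X, ℝ) → ℝ) (hνn : ν 1 = 1)
    (hνa : ∀ φ ∈ A, ∀ c : ℝ, ν (φ + ContinuousMap.const X c) = ν φ + c)
    (hνo : ∀ φ ∈ A, ∀ ψ ∈ A, φ ≤ ψ → ν φ ≤ ν ψ)
    (ψ : C(X, ℝ)) (hψ : ψ ∉ A) (a : ℝ) :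
    (∃ ν' ∈ OF X, (∀ φ ∈ A, ν' φ = ν φ) ∧ ν' ψ = a) ↔
      sSup (ν '' {φ ∈ A | φ ≤ ψ}) ≤ a ∧ a ≤ sInf (ν '' {φ ∈ A | ψ ≤ φ}) := by
  classical
  -- X is nonempty
  have hx : Nonempty X := by
    by_contra h
    rw [not_nonempty_iff] at h
    exact hψ ((ContinuousMap.ext fun x => h.elim x : ψ = 0) ▸ h0)
  obtain ⟨x0⟩ := hx
  -- basic facts about ν
  have hν0 : ν 0 = 0 := by
    have h1 : (0 : C(X, ℝ)) + ContinuousMap.const X 1 = 1 := by ext x; simp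
    have h2 := hνa 0 h0 1
    rw [h1, hνn] at h2
    linarith
  have hconstA : ∀ c : ℝ, ContinuousMap.const X c ∈ A := by
    intro c
    have := hA 0 h0 c
    rwa [zero_add] at this
  have hνconst : ∀ c : ℝ, ν (ContinuousMap.const X c) = c := by
    intro c
    have := hνa 0 h0 c
    rw [zero_add] at this
    rw [this, hν0, zero_add]
  -- bounds for ψ
  obtain ⟨Mψ, hMψ⟩ := (isCompact_range ψ.continuous).bddAbove
  obtain ⟨mψ, hmψ⟩ := (isCompact_range ψ.continuous).bddBelow
  have hMψ' : ∀ x, ψ x ≤ Mψ := fun x => hMψ (Set.mem_range_self x)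
  have hmψ' : ∀ x, mψ ≤ ψ x := fun x => hmψ (Set.mem_range_self x)
  -- the two sets
  have hloNe : (ν '' {φ ∈ A | φ ≤ ψ}).Nonempty :=
    ⟨ν (ContinuousMap.const X mψ),
      ⟨_, ⟨hconstA mψ, ContinuousMap.le_def.mpr fun x => hmψ' x⟩, rfl⟩⟩
  have hhiNe : (ν '' {φ ∈ A | ψ ≤ φ}).Nonempty :=
    ⟨ν (ContinuousMap.const X Mψ),
      ⟨_, ⟨hconstA Mψ, ContinuousMap.le_def.mpr fun x => hMψ' x⟩, rfl⟩⟩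
  have hloBdd : BddAbove (ν '' {φ ∈ A | φ ≤ ψ}) := by
    refine ⟨Mψ, ?_⟩
    rintro y ⟨φ, ⟨hφA, hφle⟩, rfl⟩
    calc ν φ ≤ ν (ContinuousMap.const X Mψ) :=
          hνo φ hφA _ (hconstA Mψ)
            (ContinuousMap.le_def.mpr fun x => (ContinuousMap.le_def.mp hφle x).trans (hMψ' x))
      _ = Mψ := hνconst Mψ
  have hhiBdd : BddBelow (ν '' {φ ∈ A | ψ ≤ φ}) := by
    refine ⟨mψ, ?_⟩
    rintro y ⟨φ, ⟨hφA, hφle⟩, rfl⟩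
    calc mψ = ν (ContinuousMap.const X mψ) := (hνconst mψ).symm
      _ ≤ ν φ := hνo _ (hconstA mψ) φ hφA
            (ContinuousMap.le_def.mpr fun x => (hmψ' x).trans (ContinuousMap.le_def.mp hφle x))
  constructor
  · -- forward
    rintro ⟨ν', ⟨hn1, _, hord⟩, hext, hval⟩
    constructor
    · apply csSup_le hloNe
      rintro y ⟨φ, ⟨hφA, hφle⟩, rfl⟩
      rw [← hext φ hφA, ← hval]
      exact hord φ ψ hφle
    · apply le_csInf hhiNe
      rintro y ⟨φ, ⟨hφA, hφle⟩, rfl⟩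
      rw [← hext φ hφA, ← hval]
      exact hord ψ φ hφle
  · -- backward
    rintro ⟨ha1, ha2⟩
    have keyLo : ∀ φ ∈ A, φ ≤ ψ → ν φ ≤ a := fun φ hφ hle =>
      le_trans (le_csSup hloBdd ⟨φ, ⟨hφ, hle⟩, rfl⟩) ha1
    have keyHi : ∀ φ ∈ A, ψ ≤ φ → a ≤ ν φ := fun φ hφ hle =>
      le_trans ha2 (csInf_le hhiBdd ⟨φ, ⟨hφ, hle⟩, rfl⟩)
    -- the extension set
    set S : C(X, ℝ) → Set ℝ := fun χ =>
      (ν '' {φ ∈ A | φ ≤ χ}) ∪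
        ((fun c => a + c) '' {c : ℝ | ψ + ContinuousMap.const X c ≤ χ}) with hS
    have hne : ∀ χ : C(X, ℝ), (S χ).Nonempty := by
      intro χ
      obtain ⟨m, hm⟩ := (isCompact_range χ.continuous).bddBelow
      exact ⟨ν (ContinuousMap.const X m),
        Or.inl ⟨_, ⟨hconstA m, ContinuousMap.le_def.mpr fun x => hm (Set.mem_range_self x)⟩, rfl⟩⟩
    have hub : ∀ χ : C(X, ℝ), ∀ M : ℝ, (∀ x, χ x ≤ M) → ∀ y ∈ S χ, y ≤ M := by
      intro χ M hM y hy
      rcases hy with ⟨φ, ⟨hφA, hφle⟩, rfl⟩ | ⟨c, hc, rfl⟩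
      · calc ν φ ≤ ν (ContinuousMap.const X M) :=
              hνo φ hφA _ (hconstA M)
                (ContinuousMap.le_def.mpr fun x => (ContinuousMap.le_def.mp hφle x).trans (hM x))
          _ = M := hνconst M
      · have hψle : ψ ≤ ContinuousMap.const X (M - c) := by
          rw [ContinuousMap.le_def]
          intro x
          have h1 := ContinuousMap.le_def.mp hc x
          simp only [ContinuousMap.add_apply, ContinuousMap.const_apply] at h1 ⊢
          linarith [hM x]
        have h2 := keyHi _ (hconstA (M - c)) hψle
        rw [hνconst] at h2
        show a + c ≤ M
        linarith
    have hbdd : ∀ χ : C(X, ℝ), BddAbove (S χ) := by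
      intro χ
      obtain ⟨M, hM⟩ := (isCompact_range χ.continuous).bddAbove
      exact ⟨M, fun y hy => hub χ M (fun x => hM (Set.mem_range_self x)) y hy⟩
    -- sup translation lemma
    have hsup_add : ∀ (s : Set ℝ) (c : ℝ), s.Nonempty → BddAbove s →
        sSup ((fun y => y + c) '' s) = sSup s + c := by
      intro s c hs hb
      obtain ⟨M, hM⟩ := hb
      have hbimg : BddAbove ((fun y => y + c) '' s) := by
        refine ⟨M + c, ?_⟩
        rintro y ⟨z, hz, rfl⟩
        exact add_le_add_left (hM hz) c
      apply le_antisymm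
      · apply csSup_le (hs.image _)
        rintro y ⟨z, hz, rfl⟩
        exact add_le_add_left (le_csSup ⟨M, hM⟩ hz) c
      · have h : sSup s ≤ sSup ((fun y => y + c) '' s) - c := by
          apply csSup_le hs
          intro z hz
          have h2 : z + c ≤ sSup ((fun y => y + c) '' s) := le_csSup hbimg ⟨z, hz, rfl⟩
          linarith
        linarith
    refine ⟨fun χ => sSup (S χ), ⟨?_, ?_, ?_⟩, ?_, ?_⟩
    · -- normed
      apply le_antisymm
      · exact csSup_le (hne 1) (hub 1 1 (fun x => by simp))
      · have h1A : (1 : ℝ) ∈ S 1 := by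
          refine Or.inl ⟨ContinuousMap.const X 1, ⟨hconstA 1, le_of_eq (by ext x; simp)⟩, hνconst 1⟩
        exact le_csSup (hbdd 1) h1A
    · -- weakly additive
      intro χ c
      have hSeq : S (χ + ContinuousMap.const X c) = (fun y => y + c) '' S χ := by
        ext y
        constructor
        · rintro (⟨φ, ⟨hφA, hφle⟩, rfl⟩ | ⟨c', hc', rfl⟩)
          · refine ⟨ν (φ + ContinuousMap.const X (-c)),
              Or.inl ⟨_, ⟨hA φ hφA (-c), ?_⟩, rfl⟩, ?_⟩
            · rw [ContinuousMap.le_def]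
              intro x
              have := ContinuousMap.le_def.mp hφle x
              simp only [ContinuousMap.add_apply, ContinuousMap.const_apply] at this ⊢
              linarith
            · rw [hνa φ hφA (-c)]; ring
          · refine ⟨a + (c' - c), Or.inr ⟨c' - c, ?_, rfl⟩, by ring⟩
            rw [Set.mem_setOf_eq, ContinuousMap.le_def]
            intro x
            have := ContinuousMap.le_def.mp hc' x
            simp only [ContinuousMap.add_apply, ContinuousMap.const_apply] at this ⊢
            linarith
        · rintro ⟨z, hz | hz, rfl⟩
          · obtain ⟨φ, ⟨hφA, hφle⟩, rfl⟩ := hz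
            refine Or.inl ⟨φ + ContinuousMap.const X c, ⟨hA φ hφA c, ?_⟩, hνa φ hφA c⟩
            rw [ContinuousMap.le_def]
            intro x
            have := ContinuousMap.le_def.mp hφle x
            simp only [ContinuousMap.add_apply, ContinuousMap.const_apply]
            linarith
          · obtain ⟨c', hc', rfl⟩ := hz
            refine Or.inr ⟨c' + c, ?_, by ring⟩
            rw [Set.mem_setOf_eq, ContinuousMap.le_def]
            intro x
            have := ContinuousMap.le_def.mp hc' x
            simp only [ContinuousMap.add_apply, ContinuousMap.const_apply] at this ⊢
            linarith
      show sSup (S (χ + ContinuousMap.const X c)) = sSup (S χ) + c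
      rw [hSeq, hsup_add _ c (hne χ) (hbdd χ)]
    · -- order preserving
      intro χ χ' hle
      apply csSup_le_csSup (hbdd χ') (hne χ)
      rintro y (⟨φ, ⟨hφA, hφle⟩, rfl⟩ | ⟨c, hc, rfl⟩)
      · exact Or.inl ⟨φ, ⟨hφA, hφle.trans hle⟩, rfl⟩
      · exact Or.inr ⟨c, le_trans hc hle, rfl⟩
    · -- extends ν on A
      intro φ₀ hφ₀
      apply le_antisymm
      · apply csSup_le (hne φ₀)
        rintro y (⟨φ, ⟨hφA, hφle⟩, rfl⟩ | ⟨c, hc, rfl⟩)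
        · exact hνo φ hφA φ₀ hφ₀ hφle
        · have hmem : φ₀ + ContinuousMap.const X (-c) ∈ A := hA φ₀ hφ₀ (-c)
          have hψle : ψ ≤ φ₀ + ContinuousMap.const X (-c) := by
            rw [ContinuousMap.le_def]
            intro x
            have := ContinuousMap.le_def.mp hc x
            simp only [ContinuousMap.add_apply, ContinuousMap.const_apply] at this ⊢
            linarith
          have := keyHi _ hmem hψle
          rw [hνa φ₀ hφ₀ (-c)] at this
          show a + c ≤ ν φ₀
          linarith
      · exact le_csSup (hbdd φ₀) (Or.inl ⟨φ₀, ⟨hφ₀, le_refl _⟩, rfl⟩)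
    · -- value at ψ
      apply le_antisymm
      · apply csSup_le (hne ψ)
        rintro y (⟨φ, ⟨hφA, hφle⟩, rfl⟩ | ⟨c, hc, rfl⟩)
        · exact keyLo φ hφA hφle
        · have := ContinuousMap.le_def.mp hc x0
          simp only [ContinuousMap.add_apply, ContinuousMap.const_apply] at this
          show a + c ≤ a
          linarith
      · have : a + 0 ∈ S ψ := by
          refine Or.inr ⟨0, ?_, rfl⟩
          rw [Set.mem_setOf_eq, ContinuousMap.le_def]
          intro x
          simp
        have h := le_csSup (hbdd ψ) this
        linarith
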